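/- With the setup of an exponent function defined from a finite measure: V^A(x) = ∫ max_{i∈A}(w_i(ω)/x_i) dμ(ω) for nonempty A ⊆ I, and for disjoint nonempty A, B ⊆ I with C = I \ (A∪B) nonempty, the quantity d_{A,B}(x) := V^{A∪C}(x) + V^{B∪C}(x) − V^I(x) − V^C(x) equals ∫ [min(max_{i∈A} w_i(ω)/x_i, max_{i∈B} w_i(ω)/x_i) − max_{j∈C} w_j(ω)/x_j]_+ dμ(ω); in particular d_{A,B}(x) ≥ 0 for all x ∈ (0,∞)^I. -/

import Mathlib

open Finset MeasureTheory

/-- Maximum over a finite set with the convention `max ∅ = 0`. -/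
noncomputable def fmax {ι : Type*} (S : Finset ι) (a : ι → ℝ) : ℝ := S.fold max 0 a

lemma fmax_empty {ι : Type*} (a : ι → ℝ) : fmax (∅ : Finset ι) a = 0 := rfl

lemma fmax_insert {ι : Type*} [DecidableEq ι] (S : Finset ι) (i : ι) (a : ι → ℝ) :
    fmax (insert i S) a = max (a i) (fmax S a) := Finset.fold_insert_idem

lemma fmax_nonneg {ι : Type*} (S : Finset ι) (a : ι → ℝ) : 0 ≤ fmax S a := by
  classical
  induction S using Finset.induction_on with
  | empty => simp [fmax_empty]
  | insert _ _ h ih => rw [fmax_insert]; exact le_max_of_le_right ih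

lemma fmax_union {ι : Type*} [DecidableEq ι] (S T : Finset ι) (a : ι → ℝ) :
    fmax (S ∪ T) a = max (fmax S a) (fmax T a) := by
  induction S using Finset.induction_on with
  | empty => simp [fmax_empty, max_eq_right (fmax_nonneg T a)]
  | insert _ _ h ih =>
      rw [Finset.insert_union, fmax_insert, fmax_insert, ih, max_assoc]

lemma integrable_fmax {Ω : Type*} [MeasurableSpace Ω] (μ : Measure Ω)
    {ι : Type*} [DecidableEq ι]
    (f : Ω → ι → ℝ) (hint : ∀ i, Integrable (fun ω => f ω i) μ) (S : Finset ι) :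
    Integrable (fun ω => fmax S (f ω)) μ := by
  induction S using Finset.induction_on with
  | empty => simpa [fmax_empty] using integrable_zero Ω ℝ μ
  | insert _ _ h ih =>
      simp only [fmax_insert]
      exact (hint _).sup ih

lemma key_identity (a b c : ℝ) :
    max a c + max b c - max (max a b) c - c = max (min a b - c) 0 := by
  rcases le_total a b with h | h
  · rw [max_eq_right h, min_eq_left h, add_sub_cancel_right,
      ← max_sub_sub_right a c c, sub_self]
  · rw [max_eq_left h, min_eq_right h, add_sub_cancel_left,
      ← max_sub_sub_right b c c, sub_self]

/-- With `V^J(x) = ∫ max_{i∈J} w_i(ω)/x_i dμ` for a finite measure `μ` and nonnegative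
integrable `w`, and disjoint nonempty `A, B ⊆ I` with `C = I \ (A ∪ B)` nonempty, the
quantity `d_{A,B}(x) = V^{A∪C}(x) + V^{B∪C}(x) − V^I(x) − V^C(x)` equals
`∫ [min(max_{i∈A} w_i/x_i, max_{i∈B} w_i/x_i) − max_{j∈C} w_j/x_j]_+ dμ`;
in particular `d_{A,B}(x) ≥ 0`. -/
theorem dAB_eq_integral {Ω : Type*} [MeasurableSpace Ω]
    (μ : Measure Ω) [IsFiniteMeasure μ]
    {ι : Type*} [Fintype ι] [DecidableEq ι]
    (w : Ω → ι → ℝ) (hwm : ∀ i, Measurable fun ω => w ω i)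
    (hw0 : ∀ ω i, 0 ≤ w ω i) (hwint : ∀ i, Integrable (fun ω => w ω i) μ)
    (x : ι → ℝ) (hx : ∀ i, 0 < x i)
    (A B : Finset ι) (hA : A.Nonempty) (hB : B.Nonempty) (hAB : Disjoint A B)
    (hC : ((A ∪ B)ᶜ : Finset ι).Nonempty) :
    (∫ ω, fmax (A ∪ (A ∪ B)ᶜ) (fun i => w ω i / x i) ∂μ)
        + (∫ ω, fmax (B ∪ (A ∪ B)ᶜ) (fun i => w ω i / x i) ∂μ)
        - (∫ ω, fmax Finset.univ (fun i => w ω i / x i) ∂μ)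
        - (∫ ω, fmax ((A ∪ B)ᶜ) (fun i => w ω i / x i) ∂μ)
      = ∫ ω, max (min (fmax A (fun i => w ω i / x i)) (fmax B (fun i => w ω i / x i))
            - fmax ((A ∪ B)ᶜ) (fun i => w ω i / x i)) 0 ∂μ
    ∧ 0 ≤ (∫ ω, fmax (A ∪ (A ∪ B)ᶜ) (fun i => w ω i / x i) ∂μ)
        + (∫ ω, fmax (B ∪ (A ∪ B)ᶜ) (fun i => w ω i / x i) ∂μ)
        - (∫ ω, fmax Finset.univ (fun i => w ω i / x i) ∂μ)
        - (∫ ω, fmax ((A ∪ B)ᶜ) (fun i => w ω i / x i) ∂μ) := by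
  have hfi : ∀ i, Integrable (fun ω => w ω i / x i) μ :=
    fun i => (hwint i).div_const (x i)
  have hI : ∀ S : Finset ι, Integrable (fun ω => fmax S (fun i => w ω i / x i)) μ :=
    integrable_fmax μ _ hfi
  have huniv : (Finset.univ : Finset ι) = (A ∪ B) ∪ (A ∪ B)ᶜ :=
    (Finset.union_compl _).symm
  have hmain :
      (∫ ω, fmax (A ∪ (A ∪ B)ᶜ) (fun i => w ω i / x i) ∂μ)
        + (∫ ω, fmax (B ∪ (A ∪ B)ᶜ) (fun i => w ω i / x i) ∂μ)
        - (∫ ω, fmax Finset.univ (fun i => w ω i / x i) ∂μ)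
        - (∫ ω, fmax ((A ∪ B)ᶜ) (fun i => w ω i / x i) ∂μ)
      = ∫ ω, max (min (fmax A (fun i => w ω i / x i)) (fmax B (fun i => w ω i / x i))
            - fmax ((A ∪ B)ᶜ) (fun i => w ω i / x i)) 0 ∂μ := by
    have hcongr :
        (∫ ω, max (min (fmax A (fun i => w ω i / x i)) (fmax B (fun i => w ω i / x i))
            - fmax ((A ∪ B)ᶜ) (fun i => w ω i / x i)) 0 ∂μ)
        = ∫ ω, fmax (A ∪ (A ∪ B)ᶜ) (fun i => w ω i / x i)
            + fmax (B ∪ (A ∪ B)ᶜ) (fun i => w ω i / x i)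
            - fmax Finset.univ (fun i => w ω i / x i)
            - fmax ((A ∪ B)ᶜ) (fun i => w ω i / x i) ∂μ := by
      refine integral_congr_ae (Filter.Eventually.of_forall fun ω => ?_)
      have := key_identity (fmax A (fun i => w ω i / x i)) (fmax B (fun i => w ω i / x i))
        (fmax ((A ∪ B)ᶜ) (fun i => w ω i / x i))
      simp only [huniv, fmax_union]
      exact this.symm
    have h2 : Integrable (fun ω => fmax (A ∪ (A ∪ B)ᶜ) (fun i => w ω i / x i)
        + fmax (B ∪ (A ∪ B)ᶜ) (fun i => w ω i / x i)) μ := (hI _).add (hI _)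
    have h3 : Integrable (fun ω => fmax (A ∪ (A ∪ B)ᶜ) (fun i => w ω i / x i)
        + fmax (B ∪ (A ∪ B)ᶜ) (fun i => w ω i / x i)
        - fmax Finset.univ (fun i => w ω i / x i)) μ := h2.sub (hI _)
    rw [hcongr, integral_sub h3 (hI _), integral_sub h2 (hI _), integral_add (hI _) (hI _)]
  refine ⟨hmain, ?_⟩
  rw [hmain]
  exact integral_nonneg fun ω => le_max_right _ _
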